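/- Let G be the group with generators a₁, b₁, a₂, b₂ and defining relators [a₁,b₁][a₂,b₂], a₁a₂, a₁b₁⁻¹a₂b₂⁻¹, b₂b₁, and [a₁,b₁] (where [x,y] = xyx⁻¹y⁻¹). Then G is a free abelian group of rank 2, isomorphic to ℤ × ℤ, generated by the images of a₁ and b₁. -/

import Mathlib

namespace MatsumotoFibration

/-- Generators `a₁, b₁, a₂, b₂` of the free group on four letters. -/
def a₁ : FreeGroup (Fin 4) := FreeGroup.of 0
def b₁ : FreeGroup (Fin 4) := FreeGroup.of 1
def a₂ : FreeGroup (Fin 4) := FreeGroup.of 2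
def b₂ : FreeGroup (Fin 4) := FreeGroup.of 3

/-- The relators induced by the vanishing cycles `B₀, B₁, B₂, c` of Matsumoto's
genus-2 Lefschetz fibration `(X₂, f₂)`, together with the surface relator. -/
def rels : Set (FreeGroup (Fin 4)) :=
  { (a₁ * b₁ * a₁⁻¹ * b₁⁻¹) * (a₂ * b₂ * a₂⁻¹ * b₂⁻¹),
    a₁ * a₂,
    a₁ * b₁⁻¹ * a₂ * b₂⁻¹,
    b₂ * b₁,
    a₁ * b₁ * a₁⁻¹ * b₁⁻¹ }

/-- Relators are killed in the presented group. -/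
lemma mk_rel {r : FreeGroup (Fin 4)} (h : r ∈ rels) : PresentedGroup.mk rels r = 1 :=
  (QuotientGroup.eq_one_iff _).2 (Subgroup.subset_normalClosure h)

lemma of2_eq : (PresentedGroup.of 2 : PresentedGroup rels) = (PresentedGroup.of 0)⁻¹ := by
  have h : (PresentedGroup.of 0 : PresentedGroup rels) * PresentedGroup.of 2 = 1 :=
    mk_rel (show a₁ * a₂ ∈ rels by simp [rels])
  exact (inv_eq_of_mul_eq_one_right h).symm

lemma of3_eq : (PresentedGroup.of 3 : PresentedGroup rels) = (PresentedGroup.of 1)⁻¹ := by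
  have h : (PresentedGroup.of 3 : PresentedGroup rels) * PresentedGroup.of 1 = 1 :=
    mk_rel (show b₂ * b₁ ∈ rels by simp [rels])
  exact eq_inv_of_mul_eq_one_left h

lemma comm01 : Commute (PresentedGroup.of 0 : PresentedGroup rels) (PresentedGroup.of 1) := by
  have h := mk_rel (show a₁ * b₁ * a₁⁻¹ * b₁⁻¹ ∈ rels by simp [rels])
  rw [a₁, b₁, map_mul, map_mul, map_mul, map_inv, map_inv] at h
  exact commutatorElement_eq_one_iff_commute.mp (by rw [commutatorElement_def]; exact h)

/-- the map to `Multiplicative (ℤ × ℤ)` -/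
noncomputable def fgen : Fin 4 → Multiplicative (ℤ × ℤ) :=
  ![Multiplicative.ofAdd (1, 0), Multiplicative.ofAdd (0, 1),
    Multiplicative.ofAdd (-1, 0), Multiplicative.ofAdd (0, -1)]

lemma fgen_rels : ∀ r ∈ rels, FreeGroup.lift fgen r = 1 := by
  intro r hr
  rcases hr with h | h | h | h | h <;> subst h <;>
    simp [a₁, b₁, a₂, b₂, fgen, map_mul, map_inv, ← ofAdd_add, ← ofAdd_neg, Prod.ext_iff]

noncomputable def φ : PresentedGroup rels →* Multiplicative (ℤ × ℤ) :=
  PresentedGroup.toGroup fgen_rels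

noncomputable def ψ : Multiplicative (ℤ × ℤ) →* PresentedGroup rels where
  toFun x := (PresentedGroup.of 0 : PresentedGroup rels) ^ x.toAdd.1 *
    (PresentedGroup.of 1 : PresentedGroup rels) ^ x.toAdd.2
  map_one' := by simp
  map_mul' x y := by
    have hc := comm01
    simp only [toAdd_mul, Prod.fst_add, Prod.snd_add, zpow_add]
    exact (hc.zpow_zpow _ _).mul_mul_mul_comm _ _

lemma φ_of (i : Fin 4) : φ (PresentedGroup.of i) = fgen i := PresentedGroup.toGroup.of _

/-- The group `G = π₁(X₂)` of Matsumoto's genus-2 Lefschetz fibration is free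
abelian of rank 2, isomorphic to `ℤ × ℤ`, generated by the images of `a₁` and `b₁`. -/
theorem pi1_matsumoto_fibration :
    Nonempty (PresentedGroup rels ≃* Multiplicative (ℤ × ℤ)) ∧
      Subgroup.closure
        ({PresentedGroup.of 0, PresentedGroup.of 1} : Set (PresentedGroup rels)) = ⊤ := by
  constructor
  · refine ⟨MonoidHom.toMulEquiv φ ψ ?_ ?_⟩
    · ext i
      fin_cases i <;>
        simp [φ_of, ψ, fgen, of2_eq, of3_eq]
    · refine MonoidHom.ext fun x => ?_
      simp only [MonoidHom.comp_apply, MonoidHom.id_apply, ψ, MonoidHom.coe_mk, OneHom.coe_mk,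
        map_mul, map_zpow, φ_of]
      show (fgen 0) ^ x.toAdd.1 * (fgen 1) ^ x.toAdd.2 = x
      simp only [fgen, Matrix.cons_val_zero, Matrix.cons_val_one, Matrix.head_cons]
      rw [← ofAdd_zsmul, ← ofAdd_zsmul, ← ofAdd_add]
      simp [Prod.ext_iff]
  · rw [eq_top_iff]
    intro x _
    refine PresentedGroup.generated_by rels _ (fun j => ?_) x
    fin_cases j
    · exact Subgroup.subset_closure (by simp)
    · exact Subgroup.subset_closure (by simp)
    · show (PresentedGroup.of 2 : PresentedGroup rels) ∈ _
      rw [of2_eq]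
      exact Subgroup.inv_mem _ (Subgroup.subset_closure (by simp))
    · show (PresentedGroup.of 3 : PresentedGroup rels) ∈ _
      rw [of3_eq]
      exact Subgroup.inv_mem _ (Subgroup.subset_closure (by simp))

end MatsumotoFibration
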